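/- Let L_k(V) be a Schurian-generated free k-category (each generating space {}_yV_x is at most one-dimensional) and let a finite group G act homogeneously on it, trivially on objects. Then the invariant subcategory L_k(V)^G is again a free k-category, free on the family of vector spaces spanned by the irreducible invariant paths. -/

import Mathlib

/-!
STATEMENT 9: Let `L_k(V)` be a Schurian-generated free `k`-category (its bases-quiver
`V` has no multiple arrows), with a homogeneous action of a finite group `G`, trivial
on objects; the action is recorded by a character `χ a : G →* kˣ` for each arrow `a`.
The invariant subcategory `L_k(V)^G` is again free, on the family spanned by the
irreducible invariant paths.  We formalize this as:
(1) the invariant morphism space from `x` to `y` (fixed points of the `G`-action on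
    the linearized path space `Path x y →₀ k`) is spanned by the invariant paths, and
(2) every invariant path is the composite of a *unique* path of irreducible invariant
    paths (so the invariant category is freely generated by the irreducible invariant
    paths).
-/

open Quiver

section

variable {k G V : Type} [Field k] [Group G] [Quiver.{1} V]

/-- The character of a path: product of the characters of its arrows. -/
def pathChar (χ : ∀ x y : V, (x ⟶ y) → (G →* kˣ)) :
    ∀ {x y : V}, Path x y → G → kˣ
  | _, _, .nil => fun _ => 1
  | _, _, .cons p e => fun g => pathChar χ p g * χ _ _ e g

/-- A path is invariant if its character is trivial. -/
def IsInvPath (χ : ∀ x y : V, (x ⟶ y) → (G →* kˣ)) {x y : V} (w : Path x y) : Prop :=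
  ∀ g : G, pathChar χ w g = 1

/-- An invariant path of positive length is irreducible if it is not the
concatenation of two invariant paths of positive length. -/
def IsIrrInvPath (χ : ∀ x y : V, (x ⟶ y) → (G →* kˣ)) {x y : V} (w : Path x y) : Prop :=
  IsInvPath χ w ∧ 0 < w.length ∧
    ¬ ∃ (z : V) (w₁ : Path x z) (w₂ : Path z y),
        0 < w₁.length ∧ 0 < w₂.length ∧ IsInvPath χ w₁ ∧ IsInvPath χ w₂ ∧ w = w₁.comp w₂

/-- The action of `g : G` on the linearized path space `Path x y →₀ k`:
each basis path `w` is scaled by its character value `χ_w(g)`. -/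
noncomputable def actG (χ : ∀ x y : V, (x ⟶ y) → (G →* kˣ)) (x y : V) (g : G) :
    (Path x y →₀ k) →ₗ[k] (Path x y →₀ k) :=
  Finsupp.lsum k fun w : Path x y =>
    (Finsupp.lsingle w).comp (((pathChar χ w g : kˣ) : k) • LinearMap.id)

/-- The invariant subspace `{}_y[L_k(V)^G]_x`: the fixed points of the action. -/
noncomputable def InvSpace (χ : ∀ x y : V, (x ⟶ y) → (G →* kˣ)) (x y : V) :
    Submodule k (Path x y →₀ k) :=
  ⨅ g : G, LinearMap.eqLocus (actG χ x y g) (LinearMap.id (R := k))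

/-- Paths of composable irreducible invariant paths: the morphisms of the free
category generated by the irreducible invariant paths. -/
inductive IrrPath (χ : ∀ x y : V, (x ⟶ y) → (G →* kˣ)) : V → V → Type 1
  | nil (x : V) : IrrPath χ x x
  | cons {x y z : V} (c : IrrPath χ x y) (w : Path y z) (h : IsIrrInvPath χ w) :
      IrrPath χ x z

/-- The composite of the members of such a path. -/
def IrrPath.compose {χ : ∀ x y : V, (x ⟶ y) → (G →* kˣ)} :
    ∀ {x y : V}, IrrPath χ x y → Path x y
  | _, _, .nil _ => Path.nil
  | _, _, .cons c w _ => (IrrPath.compose c).comp w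

end

section Aux

variable {k G V : Type} [Field k] [Group G] [Quiver.{1} V]
variable (χ : ∀ x y : V, (x ⟶ y) → (G →* kˣ))

lemma pathChar_nil {x : V} (g : G) : pathChar (k := k) χ (Path.nil : Path x x) g = 1 := by
  simp [pathChar]

lemma pathChar_cons {x y z : V} (p : Path x y) (e : y ⟶ z) (g : G) :
    pathChar (k := k) χ (p.cons e) g = pathChar χ p g * χ _ _ e g := by
  simp [pathChar]

lemma compose_nil {x : V} : (IrrPath.nil x : IrrPath (k := k) χ x x).compose = Path.nil := by
  simp [IrrPath.compose]

lemma compose_cons {x y z : V} (c : IrrPath (k := k) χ x y) (w : Path y z)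
    (h : IsIrrInvPath χ w) : (IrrPath.cons c w h).compose = c.compose.comp w := by
  simp [IrrPath.compose]

lemma pathChar_comp {x y z : V} (p : Path x y) (q : Path y z) (g : G) :
    pathChar (k := k) χ (p.comp q) g = pathChar χ p g * pathChar χ q g := by
  induction q with
  | nil => simp [Path.comp_nil, pathChar_nil]
  | cons q e ih =>
      rw [Path.comp_cons, pathChar_cons, pathChar_cons, ih, mul_assoc]

lemma isInvPath_comp {x y z : V} {p : Path x y} {q : Path y z}
    (hp : IsInvPath χ p) (hq : IsInvPath χ q) : IsInvPath χ (p.comp q) := fun g => by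
  rw [pathChar_comp, hp g, hq g, one_mul]

lemma isInvPath_left {x y z : V} {p : Path x y} {q : Path y z}
    (h : IsInvPath χ (p.comp q)) (hq : IsInvPath χ q) : IsInvPath χ p := fun g => by
  have := h g
  rwa [pathChar_comp, hq g, mul_one] at this

lemma isInvPath_right {x y z : V} {p : Path x y} {q : Path y z}
    (h : IsInvPath χ (p.comp q)) (hp : IsInvPath χ p) : IsInvPath χ q := fun g => by
  have := h g
  rwa [pathChar_comp, hp g, one_mul] at this

lemma IrrPath.compose_isInv : ∀ {x y : V} (c : IrrPath (k := k) χ x y), IsInvPath χ c.compose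
  | _, _, .nil _ => fun g => by rw [compose_nil, pathChar_nil]
  | _, _, .cons c w h => by
      rw [compose_cons]
      exact isInvPath_comp χ (IrrPath.compose_isInv c) h.1

lemma suffix_of_comp_eq :
    ∀ {z₁ y : V} (q₁ : Path z₁ y) {x z₂ : V} (p₁ : Path x z₁) (p₂ : Path x z₂) (q₂ : Path z₂ y),
      p₁.comp q₁ = p₂.comp q₂ → q₁.length ≤ q₂.length →
      ∃ u : Path z₂ z₁, p₁ = p₂.comp u ∧ q₂ = u.comp q₁
  | _, _, .nil, _, _, p₁, p₂, q₂, h, _ =>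
      ⟨q₂, by simpa [Path.comp_nil] using h, (Path.comp_nil q₂).symm⟩
  | _, _, .cons q e, _, _, p₁, p₂, q₂, h, hle => by
      cases q₂ with
      | nil => simp at hle
      | cons q' e' =>
          rw [Path.comp_cons, Path.comp_cons] at h
          have hm := Quiver.Path.obj_eq_of_cons_eq_cons h
          subst hm
          have he := eq_of_heq (Quiver.Path.hom_heq_of_cons_eq_cons h)
          have h' := eq_of_heq (Quiver.Path.heq_of_cons_eq_cons h)
          obtain ⟨u, hu1, hu2⟩ := suffix_of_comp_eq q p₁ p₂ q' h' (by simpa using hle)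
          exact ⟨u, hu1, by rw [hu2, Path.comp_cons, he]⟩

lemma exists_decomp : ∀ (n : ℕ) {x y : V} (w : Path x y), w.length ≤ n →
    IsInvPath (k := k) χ w → ∃ c : IrrPath χ x y, c.compose = w := by
  intro n
  induction n with
  | zero =>
      intro x y w hle _
      cases w with
      | nil => exact ⟨IrrPath.nil x, compose_nil χ⟩
      | cons p e => simp at hle
  | succ n ih =>
      intro x y w hle hw
      cases w with
      | nil => exact ⟨IrrPath.nil x, compose_nil χ⟩
      | cons p e =>
          classical
          set w : Path x y := p.cons e with hwdef
          have hwpos : 0 < w.length := Nat.succ_pos _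
          have hP : ∃ m, ∃ (z : V) (w₁ : Path x z) (w₂ : Path z y),
              0 < w₂.length ∧ w₂.length = m ∧ IsInvPath χ w₂ ∧ w = w₁.comp w₂ :=
            ⟨w.length, x, Path.nil, w, hwpos, rfl, hw, (Path.nil_comp w).symm⟩
          obtain ⟨z, w₁, w₂, hpos, hlen, hinv₂, heqw⟩ := Nat.find_spec hP
          have hmin := fun m (hm : m < Nat.find hP) => Nat.find_min hP hm
          have hinv₁ : IsInvPath χ w₁ := isInvPath_left χ (heqw ▸ hw) hinv₂
          have hirr : IsIrrInvPath χ w₂ := by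
            refine ⟨hinv₂, hpos, ?_⟩
            rintro ⟨z', u, v, hupos, hvpos, hu, hv, rfl⟩
            have hvlt : v.length < Nat.find hP := by
              rw [← hlen, Path.length_comp]; omega
            exact hmin v.length hvlt ⟨z', w₁.comp u, v, hvpos, rfl, hv,
              by rw [heqw, Path.comp_assoc]⟩
          have hw₁len : w₁.length ≤ n := by
            have := congrArg Path.length heqw
            rw [Path.length_comp] at this
            omega
          obtain ⟨c₁, hc₁⟩ := ih w₁ hw₁len hinv₁
          exact ⟨IrrPath.cons c₁ w₂ hirr, by
            rw [compose_cons, hc₁, heqw]⟩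

lemma last_eq_of_le {x y z₁ z₂ : V} (p₁ : Path x z₁) (w₁ : Path z₁ y)
    (p₂ : Path x z₂) (w₂ : Path z₂ y)
    (heq : p₁.comp w₁ = p₂.comp w₂) (hle : w₁.length ≤ w₂.length)
    (hinv₁ : IsInvPath (k := k) χ w₁) (hpos₁ : 0 < w₁.length) (h₂ : IsIrrInvPath χ w₂) :
    z₁ = z₂ ∧ HEq w₁ w₂ := by
  obtain ⟨u, hu1, hu2⟩ := suffix_of_comp_eq w₁ p₁ p₂ w₂ heq hle
  have hinvu : IsInvPath χ u := isInvPath_left χ (hu2 ▸ h₂.1) hinv₁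
  have hu0 : u.length = 0 := by
    by_contra h
    exact h₂.2.2 ⟨z₁, u, w₁, Nat.pos_of_ne_zero h, hpos₁, hinvu, hinv₁, hu2⟩
  have hz : z₂ = z₁ := Quiver.Path.eq_of_length_zero u hu0
  subst hz
  have hun : u = Path.nil := Quiver.Path.eq_nil_of_length_zero u hu0
  refine ⟨rfl, heq_of_eq ?_⟩
  rw [hu2, hun, Path.nil_comp]

lemma compose_injective :
    ∀ {x y : V} (c₁ c₂ : IrrPath (k := k) χ x y), c₁.compose = c₂.compose → c₁ = c₂ := by
  intro x y c₁
  induction c₁ with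
  | nil =>
      intro c₂ h
      cases c₂ with
      | nil => rfl
      | cons c w hw =>
          exfalso
          rw [compose_nil, compose_cons] at h
          have := congrArg Path.length h
          rw [Path.length_comp, Path.length_nil] at this
          have hp := hw.2.1
          omega
  | cons c₁ w₁ h₁ ih =>
      intro c₂ h
      cases c₂ with
      | nil =>
          exfalso
          rw [compose_nil, compose_cons] at h
          have := congrArg Path.length h
          rw [Path.length_comp, Path.length_nil] at this
          have hp := h₁.2.1
          omega
      | cons c₂ w₂ h₂ =>
          rw [compose_cons, compose_cons] at h
          have h' : c₁.compose.comp w₁ = c₂.compose.comp w₂ := h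
          rcases le_total w₁.length w₂.length with hle | hle
          · obtain ⟨hz, hh⟩ := last_eq_of_le χ _ w₁ _ w₂ h' hle h₁.1 h₁.2.1 h₂
            subst hz
            obtain rfl := eq_of_heq hh
            obtain rfl : c₁ = c₂ := ih c₂ (Quiver.Path.comp_injective_left _ h')
            rfl
          · obtain ⟨hz, hh⟩ := last_eq_of_le χ _ w₂ _ w₁ h'.symm hle h₂.1 h₂.2.1 h₁
            subst hz
            obtain rfl := eq_of_heq hh
            obtain rfl : c₁ = c₂ := ih c₂ (Quiver.Path.comp_injective_left _ h')
            rfl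

lemma actG_single (x y : V) (g : G) (w : Path x y) (a : k) :
    actG χ x y g (Finsupp.single w a) = Finsupp.single w (((pathChar χ w g : kˣ) : k) * a) := by
  unfold actG
  rw [Finsupp.lsum_single]
  simp only [LinearMap.comp_apply, LinearMap.smul_apply, LinearMap.id_apply,
    Finsupp.lsingle_apply, smul_eq_mul]

lemma actG_apply (x y : V) (g : G) (f : Path x y →₀ k) (w : Path x y) :
    actG χ x y g f w = ((pathChar χ w g : kˣ) : k) * f w := by
  classical
  rw [actG, Finsupp.lsum_apply, Finsupp.sum_apply]
  rw [Finsupp.sum]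
  simp only [LinearMap.comp_apply, LinearMap.smul_apply, LinearMap.id_apply,
    Finsupp.lsingle_apply, Finsupp.single_apply, smul_eq_mul]
  rw [Finset.sum_ite_eq' f.support w]
  by_cases hw : w ∈ f.support
  · simp [hw]
  · simp [hw, Finsupp.notMem_support_iff.mp hw]

end Aux

/-- The invariant subcategory of a Schurian-generated free `k`-category under a
homogeneous action of a finite group is free over the irreducible invariant paths:
invariants are spanned by invariant paths, and each invariant path is the composite
of a unique sequence of irreducible invariant paths. -/
theorem invariants_of_schurian_generated_free_category_are_free
    {k G V : Type} [Field k] [Group G] [Finite G] [Quiver.{1} V]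
    [∀ x y : V, Subsingleton (x ⟶ y)]
    (χ : ∀ x y : V, (x ⟶ y) → (G →* kˣ)) :
    (∀ x y : V, InvSpace (k := k) χ x y =
        Submodule.span k {f : Path x y →₀ k |
          ∃ w : Path x y, IsInvPath χ w ∧ f = Finsupp.single w 1}) ∧
    (∀ (x y : V) (w : Path x y),
        IsInvPath χ w ↔ ∃! c : IrrPath χ x y, c.compose = w) := by
  constructor
  · intro x y
    classical
    apply le_antisymm
    · intro f hf
      have hf' : ∀ g : G, actG χ x y g f = f := by
        intro g
        have h := (Submodule.mem_iInf _).mp hf g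
        exact LinearMap.mem_eqLocus.mp h
      have hsupp : ↑f.support ⊆ {w : Path x y | IsInvPath χ w} := by
        intro w hw
        intro g
        have h1 := DFunLike.congr_fun (hf' g) w
        rw [actG_apply] at h1
        have hfw : f w ≠ 0 := Finsupp.mem_support_iff.mp hw
        have hval : ((pathChar χ w g : kˣ) : k) = 1 :=
          mul_right_cancel₀ hfw (h1.trans (one_mul (f w)).symm)
        exact Units.ext (hval.trans Units.val_one.symm)
      have hmem : f ∈ Finsupp.supported k k {w : Path x y | IsInvPath χ w} :=
        (Finsupp.mem_supported k f).mpr hsupp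
      rw [Finsupp.supported_eq_span_single] at hmem
      refine Submodule.span_mono ?_ hmem
      rintro _ ⟨w, hw, rfl⟩
      exact ⟨w, hw, rfl⟩
    · rw [Submodule.span_le]
      rintro f ⟨w, hw, rfl⟩
      rw [SetLike.mem_coe, InvSpace, Submodule.mem_iInf]
      intro g
      rw [LinearMap.mem_eqLocus, LinearMap.id_apply, actG_single, hw g, Units.val_one, one_mul]
  · intro x y w
    constructor
    · intro hw
      obtain ⟨c, hc⟩ := exists_decomp χ w.length w le_rfl hw
      exact ⟨c, hc, fun c' hc' => compose_injective χ c' c (hc'.trans hc.symm)⟩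
    · rintro ⟨c, hc, -⟩
      rw [← hc]
      exact IrrPath.compose_isInv χ c
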